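/- Let −A*y ∈ ∂J(x) and −A*ȳ ∈ ∂J(x̄) with Ax̄ = f. Then D^{−A*y}(x̄, x) = D_δ(y) − D_δ(ȳ) + ⟨f − f^δ, y − ȳ⟩, where D_δ(y) = J*(−A*y) + ⟨f^δ, y⟩ is the inexact dual function. -/
import Mathlib


open Set MeasureTheory

noncomputable section

notation "⟪" x ", " y "⟫" => @inner ℝ _ _ x y

/-- `u` is a subgradient of the convex function `J` at `x`. -/
def HasSubgrad {p : ℕ} (J : EuclideanSpace ℝ (Fin p) → ℝ) (u x : EuclideanSpace ℝ (Fin p)) :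
    Prop :=
  ∀ z, J x + ⟪u, z - x⟫ ≤ J z

/-- Bregman divergence `D^u(x₁,x₂) = J(x₁) - J(x₂) - ⟨u, x₁ - x₂⟩` (for `u ∈ ∂J(x₂)`). -/
def Breg {p : ℕ} (J : EuclideanSpace ℝ (Fin p) → ℝ) (u x₁ x₂ : EuclideanSpace ℝ (Fin p)) : ℝ :=
  J x₁ - J x₂ - ⟪u, x₁ - x₂⟫

/-- Fenchel conjugate `J*(u) = sup_z ⟨u,z⟩ - J(z)` (real-valued; correct whenever the
supremum is finite, e.g. when `u` lies in the range of `∂J`). -/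
def fenchelConj {p : ℕ} (J : EuclideanSpace ℝ (Fin p) → ℝ) (u : EuclideanSpace ℝ (Fin p)) : ℝ :=
  sSup (Set.range fun z => ⟪u, z⟫ - J z)

/-- The inexact dual function `D_δ(y) = J*(-A*y) + ⟨f^δ, y⟩`. -/
def dualFun {p d : ℕ} (J : EuclideanSpace ℝ (Fin p) → ℝ)
    (A : EuclideanSpace ℝ (Fin p) →L[ℝ] EuclideanSpace ℝ (Fin d))
    (fδ y : EuclideanSpace ℝ (Fin d)) : ℝ :=
  fenchelConj J (-(ContinuousLinearMap.adjoint A y)) + ⟪fδ, y⟫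

/-- For `-A*y ∈ ∂J(x)` and a primal-dual solution `(x̄, ȳ)` (with `Ax̄ = f`), the Bregman
divergence `D^{-A*y}(x̄, x)` equals `D_δ(y) - D_δ(ȳ) + ⟨f - f^δ, y - ȳ⟩`. -/

lemma fenchelConj_eq_of_subgrad {p : ℕ} (J : EuclideanSpace ℝ (Fin p) → ℝ)
    (u x : EuclideanSpace ℝ (Fin p)) (h : HasSubgrad J u x) :
    fenchelConj J u = ⟪u, x⟫ - J x := by
  apply IsGreatest.csSup_eq
  constructor
  · exact ⟨x, rfl⟩
  · rintro r ⟨z, rfl⟩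
    have := h z
    rw [inner_sub_right] at this
    dsimp only
    linarith

theorem bregman_eq_dual_gap {p d : ℕ}
    (A : EuclideanSpace ℝ (Fin p) →L[ℝ] EuclideanSpace ℝ (Fin d))
    (J : EuclideanSpace ℝ (Fin p) → ℝ) (f fδ : EuclideanSpace ℝ (Fin d))
    (x xb : EuclideanSpace ℝ (Fin p)) (y yb : EuclideanSpace ℝ (Fin d))
    (hx : HasSubgrad J (-(ContinuousLinearMap.adjoint A y)) x)
    (hxb : HasSubgrad J (-(ContinuousLinearMap.adjoint A yb)) xb)
    (hfeas : A xb = f) :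
    Breg J (-(ContinuousLinearMap.adjoint A y)) xb x =
      dualFun J A fδ y - dualFun J A fδ yb + ⟪f - fδ, y - yb⟫ := by
  have h1 := fenchelConj_eq_of_subgrad J _ _ hx
  have h2 := fenchelConj_eq_of_subgrad J _ _ hxb
  simp only [Breg, dualFun, h1, h2]
  rw [← hfeas]
  simp only [inner_sub_left, inner_sub_right, inner_neg_left,
    ContinuousLinearMap.adjoint_inner_left, real_inner_comm (A xb) y,
    real_inner_comm (A xb) yb]
  ring
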